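/- Let U be a free (nonprincipal) ultrafilter on ℕ and let (μ_n)_{n∈ℕ} be Borel probability measures on ℝ such that for every bounded continuous f : ℝ → ℝ and every L ∈ ℝ, if the sequence k ↦ f(k) tends to L along U then ∫ f dμ_n → L as n → ∞. Then μ_n(ℕ) → 1 as n → ∞, where ℕ is regarded as the set {0, 1, 2, …} of natural numbers inside ℝ. -/

import Mathlib

open MeasureTheory Filter Topology

private lemma aux_integrable {ν : Measure ℝ} [IsFiniteMeasure ν] {f : ℝ → ℝ}
    (hf : Continuous f) (C : ℝ) (hC : ∀ x, |f x| ≤ C) : Integrable f ν :=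
  (integrable_const C).mono' hf.aestronglyMeasurable (Filter.Eventually.of_forall hC)

private lemma aux_escape (U : Ultrafilter ℕ) (hU : (U : Filter ℕ) ≤ Filter.cofinite)
    (μ : ℕ → Measure ℝ) (hprob : ∀ n, IsProbabilityMeasure (μ n))
    (hconv : ∀ f : ℝ → ℝ, Continuous f → (∃ C : ℝ, ∀ x, |f x| ≤ C) →
      ∀ L : ℝ, Tendsto (fun k : ℕ => f k) (U : Filter ℕ) (𝓝 L) →
        Tendsto (fun n => ∫ x, f x ∂(μ n)) atTop (𝓝 L))
    (R : ℝ) : Tendsto (fun n => μ n (Set.Iic R)) atTop (𝓝 0) := by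
  set f : ℝ → ℝ := fun x => max 0 (min 1 (R + 1 - x)) with hfdef
  have hcont : Continuous f :=
    continuous_const.max (continuous_const.min (continuous_const.sub continuous_id))
  have h0 : ∀ x, 0 ≤ f x := fun x => le_max_left _ _
  have h1 : ∀ x, f x ≤ 1 := fun x => max_le zero_le_one (min_le_left _ _)
  have hbd : ∀ x, |f x| ≤ 1 := fun x => abs_le.2 ⟨by linarith [h0 x], h1 x⟩
  have hzero : Tendsto (fun k : ℕ => f k) (U : Filter ℕ) (𝓝 0) := by
    apply tendsto_const_nhds.congr'
    apply hU
    rw [Nat.cofinite_eq_atTop]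
    filter_upwards [eventually_ge_atTop ⌈R + 1⌉₊] with k hk
    have hk' : R + 1 ≤ (k : ℝ) := le_trans (Nat.le_ceil _) (by exact_mod_cast hk)
    have : min 1 (R + 1 - (k : ℝ)) ≤ 0 := le_trans (min_le_right _ _) (by linarith)
    simp only [hfdef]
    rw [max_eq_left this]
  have hInt := hconv f hcont ⟨1, hbd⟩ 0 hzero
  have key : ∀ n, μ n (Set.Iic R) ≤ ENNReal.ofReal (∫ x, f x ∂ μ n) := by
    intro n
    haveI := hprob n
    have hfi : Integrable f (μ n) := aux_integrable hcont 1 hbd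
    rw [ofReal_integral_eq_lintegral_ofReal hfi (Filter.Eventually.of_forall h0)]
    calc μ n (Set.Iic R) = ∫⁻ _ in Set.Iic R, 1 ∂ μ n := by simp
      _ ≤ ∫⁻ x in Set.Iic R, ENNReal.ofReal (f x) ∂ μ n := by
          refine setLIntegral_mono (hcont.measurable.ennreal_ofReal) ?_
          intro x hx
          have hx' : x ≤ R := hx
          have : f x = 1 := by
            simp only [hfdef]
            rw [min_eq_left (by linarith), max_eq_right zero_le_one]
          rw [this]
          simp
      _ ≤ ∫⁻ x, ENNReal.ofReal (f x) ∂ μ n := setLIntegral_le_lintegral _ _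
  have h2 : Tendsto (fun n => ENNReal.ofReal (∫ x, f x ∂ μ n)) atTop (𝓝 0) := by
    simpa using ENNReal.tendsto_ofReal hInt
  exact tendsto_of_tendsto_of_tendsto_of_le_of_le tendsto_const_nhds h2
    (fun n => zero_le) key

/-- second intermediate claim in Example 5.11: if the Borel probability
measures `μ n` on `ℝ` converge weakly (against bounded continuous functions) to the charge
determined by the free ultrafilter `U`, then `μ n (ℕ) → 1`, where `ℕ ⊆ ℝ` is the range of
the natural number cast. -/
theorem tendsto_measure_nat_one_of_weak_limit_ultrafilter_charge
    (U : Ultrafilter ℕ) (hU : (U : Filter ℕ) ≤ Filter.cofinite)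
    (μ : ℕ → Measure ℝ) (hprob : ∀ n, IsProbabilityMeasure (μ n))
    (hconv : ∀ f : ℝ → ℝ, Continuous f → (∃ C : ℝ, ∀ x, |f x| ≤ C) →
      ∀ L : ℝ, Tendsto (fun k : ℕ => f k) (U : Filter ℕ) (𝓝 L) →
        Tendsto (fun n => ∫ x, f x ∂(μ n)) atTop (𝓝 L)) :
    Tendsto (fun n => μ n (Set.range ((↑) : ℕ → ℝ))) atTop (𝓝 1) := by
  set A : Set ℝ := Set.range ((↑) : ℕ → ℝ) with hA
  have hAclosed : IsClosed A := Nat.isClosedEmbedding_coe_real.isClosed_range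
  have hAmeas : MeasurableSet A := hAclosed.measurableSet
  have main : Tendsto (fun n => μ n Aᶜ) atTop (𝓝 0) := by
    rw [ENNReal.tendsto_nhds_zero]
    by_contra hcon
    push_neg at hcon
    obtain ⟨ε, hε, hfreq⟩ := hcon
    have hfreq' : ∃ᶠ n in atTop, ε < μ n Aᶜ := hfreq
    set E : ENNReal := min ε 1 with hE
    have hE0 : 0 < E := lt_min hε zero_lt_one
    have hE1 : E ≤ 1 := min_le_right _ _
    have hEtop : E ≠ ⊤ := ne_top_of_le_ne_top ENNReal.one_ne_top hE1
    have hfreqE : ∃ᶠ n in atTop, E < μ n Aᶜ :=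
      hfreq'.mono (fun n hn => lt_of_le_of_lt (min_le_left _ _) hn)
    have hE4 : (0:ENNReal) < E / 4 := ENNReal.div_pos hE0.ne' (by norm_num)
    have hE4top : E / 4 ≠ ⊤ := (ENNReal.div_lt_top hEtop (by norm_num)).ne
    set c : ℝ := (E / 4).toReal with hc
    have hcpos : 0 < c := ENNReal.toReal_pos hE4.ne' hE4top
    -- key step lemma
    have key : ∀ (prev : ℝ) (j : ℕ), ∃ (n : ℕ) (S : ℝ) (f : ℝ → ℝ),
        j ≤ n ∧ prev + 3 ≤ S ∧ Continuous f ∧ (∀ x, 0 ≤ f x) ∧ (∀ x, f x ≤ 1) ∧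
        (∀ x, x ∉ Set.Ioo (prev + 2) S → f x = 0) ∧ (∀ k : ℕ, f (k : ℝ) = 0) ∧
        c ≤ ∫ x, f x ∂ μ n := by
      intro prev j
      have hev : ∀ᶠ n in atTop, μ n (Set.Iic (prev + 2)) ≤ E / 4 := by
        have h := aux_escape U hU μ hprob hconv (prev + 2)
        rw [ENNReal.tendsto_nhds_zero] at h
        exact h _ hE4
      obtain ⟨n, hn1, hn2, hnj⟩ :=
        (hfreqE.and_eventually (hev.and (eventually_ge_atTop j))).exists
      haveI := hprob n
      set O₀ : Set ℝ := Aᶜ ∩ Set.Ioi (prev + 2) with hO₀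
      have hO₀open : IsOpen O₀ := hAclosed.isOpen_compl.inter isOpen_Ioi
      have hO₀big : E / 4 < μ n O₀ := by
        by_contra hle
        push_neg at hle
        have hsub : Aᶜ ⊆ Set.Iic (prev + 2) ∪ O₀ := by
          intro x hx
          by_cases h : x ≤ prev + 2
          · exact Or.inl h
          · exact Or.inr ⟨hx, lt_of_not_ge h⟩
        have hb : μ n Aᶜ ≤ E / 4 + E / 4 :=
          le_trans (measure_mono hsub) (le_trans (measure_union_le _ _)
            (add_le_add hn2 hle))
        have h24 : E / 4 ≤ E / 2 := ENNReal.div_le_div le_rfl (by norm_num)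
        have hEE : E / 4 + E / 4 ≤ E := by
          calc E / 4 + E / 4 ≤ E / 2 + E / 2 := add_le_add h24 h24
            _ = E := ENNReal.add_halves E
        exact absurd (lt_of_lt_of_le hn1 (le_trans hb hEE)) (lt_irrefl _)
      obtain ⟨K, hKsub, hKcomp, hKμ⟩ := hO₀open.exists_lt_isCompact hO₀big
      obtain ⟨B, hB⟩ := hKcomp.bddAbove
      set O : Set ℝ := O₀ ∩ Set.Iio (B + 1) with hO
      have hOopen : IsOpen O := hO₀open.inter isOpen_Iio
      have hKO : K ⊆ O := fun x hx => ⟨hKsub hx, lt_of_le_of_lt (hB hx) (by linarith)⟩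
      obtain ⟨g, hg0, hg1, hg01⟩ := exists_continuous_zero_one_of_isClosed
        hOopen.isClosed_compl hKcomp.isClosed (disjoint_compl_left.mono_right hKO)
      set S : ℝ := max (B + 1) (prev + 3) with hS
      have hgnn : ∀ x, 0 ≤ g x := fun x => (hg01 x).1
      have hgle : ∀ x, g x ≤ 1 := fun x => (hg01 x).2
      have hsupp : ∀ x, x ∉ Set.Ioo (prev + 2) S → g x = 0 := by
        intro x hx
        have hxO : x ∈ Oᶜ := by
          intro hxO
          exact hx ⟨hxO.1.2, lt_of_lt_of_le hxO.2 (le_max_left _ _)⟩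
        simpa using hg0 hxO
      have hnat : ∀ k : ℕ, g (k : ℝ) = 0 := by
        intro k
        have hxO : (k : ℝ) ∈ Oᶜ := by
          intro hxO
          exact hxO.1.1 ⟨k, rfl⟩
        simpa using hg0 hxO
      have hgbd : ∀ x, |g x| ≤ 1 := fun x => abs_le.2 ⟨by linarith [hgnn x], hgle x⟩
      have hIntg : Integrable (fun x => g x) (μ n) :=
        aux_integrable g.continuous 1 hgbd
      have hKmeas : MeasurableSet K := hKcomp.isClosed.measurableSet
      have hint1 : ∫ x in K, g x ∂ μ n = (μ n K).toReal := by
        rw [setIntegral_congr_fun hKmeas hg1]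
        simp [measureReal_def]
      have hint2 : (μ n K).toReal ≤ ∫ x, g x ∂ μ n := by
        rw [← hint1]
        exact setIntegral_le_integral hIntg (Filter.Eventually.of_forall hgnn)
      have hint3 : c ≤ (μ n K).toReal :=
        ENNReal.toReal_mono (measure_ne_top _ _) hKμ.le
      exact ⟨n, S, fun x => g x, hnj, le_max_right _ _, g.continuous, hgnn, hgle,
        hsupp, hnat, le_trans hint3 hint2⟩
    choose nF SF fF hjF hSF hcontF hnnF hleF hsuppF hnatF hintF using key
    set T : ℕ → ℝ := fun j => Nat.rec 0 (fun i prev => SF prev i) j with hT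
    have hTsucc : ∀ j : ℕ, T (j + 1) = SF (T j) j := fun j => rfl
    have hTstep : ∀ j : ℕ, T j + 3 ≤ T (j + 1) := fun j => by
      rw [hTsucc]; exact hSF (T j) j
    have hTmono : Monotone T := monotone_nat_of_le_succ (fun j => by linarith [hTstep j])
    have hTge : ∀ j : ℕ, 3 * (j : ℝ) ≤ T j := by
      intro j
      induction j with
      | zero => simp [hT]
      | succ i ih =>
        have := hTstep i
        push_cast
        linarith
    set G : ℕ → ℝ → ℝ := fun j => fF (T j) j with hG
    set ν : ℕ → ℕ := fun j => nF (T j) j with hν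
    have hGsupp : ∀ j x, x ∉ Set.Ioo (T j + 2) (T (j + 1)) → G j x = 0 := by
      intro j x hx
      exact hsuppF (T j) j x (by rwa [hTsucc] at hx)
    have hGnn : ∀ j x, 0 ≤ G j x := fun j x => hnnF (T j) j x
    have hGle : ∀ j x, G j x ≤ 1 := fun j x => hleF (T j) j x
    have hdisj : ∀ (x : ℝ) (i j : ℕ), G i x ≠ 0 → G j x ≠ 0 → i = j := by
      have haux : ∀ (x : ℝ) (i j : ℕ), i < j → G i x ≠ 0 → G j x ≠ 0 → False := by
        intro x i j hij hi hj
        have hxi : x ∈ Set.Ioo (T i + 2) (T (i + 1)) := by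
          by_contra h; exact hi (hGsupp i x h)
        have hxj : x ∈ Set.Ioo (T j + 2) (T (j + 1)) := by
          by_contra h; exact hj (hGsupp j x h)
        have h1 : T (i + 1) ≤ T j := hTmono hij
        have := hxi.2
        have := hxj.1
        linarith
      intro x i j hi hj
      rcases lt_trichotomy i j with h | h | h
      · exact absurd (haux x i j h hi hj) id
      · exact h
      · exact absurd (haux x j i h hj hi) id
    have hfinsupp : ∀ x : ℝ, (Function.support fun j => G j x).Finite := by
      intro x
      apply Set.Finite.subset (Set.finite_Iio ⌈x⌉₊)
      intro j hj
      have hx : x ∈ Set.Ioo (T j + 2) (T (j + 1)) := by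
        by_contra h; exact hj (hGsupp j x h)
      have h1 : (j : ℝ) < x := by
        have h2 := hTge j
        have h3 := hx.1
        have h4 : (0:ℝ) ≤ (j : ℝ) := Nat.cast_nonneg j
        linarith
      exact Set.mem_Iio.2 (Nat.lt_ceil.2 h1)
    have hsummable : ∀ x, Summable (fun j => G j x) :=
      fun x => summable_of_finite_support (hfinsupp x)
    set F : ℝ → ℝ := fun x => ∑' j, G j x with hF
    have hFnn : ∀ x, 0 ≤ F x := fun x => tsum_nonneg (fun j => hGnn j x)
    have hFle : ∀ x, F x ≤ 1 := by
      intro x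
      by_cases h : ∃ j, G j x ≠ 0
      · obtain ⟨j, hj⟩ := h
        have : F x = G j x := by
          apply tsum_eq_single
          intro b hb
          by_contra hb'
          exact hb (hdisj x b j hb' hj)
        rw [this]
        exact hGle j x
      · push_neg at h
        have : F x = 0 := by
          simp only [hF]
          rw [tsum_congr h, tsum_zero]
        rw [this]
        exact zero_le_one
    have hFbd : ∀ x, |F x| ≤ 1 := fun x => abs_le.2 ⟨by linarith [hFnn x], hFle x⟩
    have hFnat : ∀ k : ℕ, F (k : ℝ) = 0 := by
      intro k
      simp only [hF]
      rw [tsum_congr (fun j => hnatF (T j) j k), tsum_zero]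
    have hFcont : Continuous F := by
      rw [continuous_iff_continuousAt]
      intro x
      obtain ⟨m, hm⟩ : ∃ m : ℕ, x < 3 * (m : ℝ) :=
        ⟨⌈x⌉₊ + 1, by push_cast; have := Nat.le_ceil x; linarith [Nat.cast_nonneg (α := ℝ) ⌈x⌉₊]⟩
      have hopen : Set.Iio (T m + 2) ∈ 𝓝 x := Iio_mem_nhds (by linarith [hTge m])
      have hEq : Set.EqOn (fun y => ∑ j ∈ Finset.range m, G j y) F (Set.Iio (T m + 2)) := by
        intro y hy
        have : F y = ∑ j ∈ Finset.range m, G j y := by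
          apply tsum_eq_sum
          intro j hj
          apply hGsupp
          intro hmem
          have h1 : T m ≤ T j := hTmono (le_of_not_gt (fun h => hj (Finset.mem_range.2 h)))
          have h2 := hmem.1
          have h3 : y < T m + 2 := hy
          linarith
        exact this.symm
      exact ((continuous_finset_sum _ (fun j _ => hcontF (T j) j)).continuousAt).congr
        (hEq.eventuallyEq_of_mem hopen)
    have hνtend : Tendsto ν atTop atTop :=
      tendsto_atTop_mono (fun j => hjF (T j) j) tendsto_id
    have hFzeroU : Tendsto (fun k : ℕ => F k) (U : Filter ℕ) (𝓝 0) :=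
      tendsto_const_nhds.congr (fun k => (hFnat k).symm)
    have hFlim := hconv F hFcont ⟨1, hFbd⟩ 0 hFzeroU
    have h2 : Tendsto (fun j => ∫ x, F x ∂ μ (ν j)) atTop (𝓝 0) := hFlim.comp hνtend
    have h3 : ∀ j, c ≤ ∫ x, F x ∂ μ (ν j) := by
      intro j
      haveI := hprob (ν j)
      have hmono : ∀ x, G j x ≤ F x :=
        fun x => Summable.le_tsum (hsummable x) j (fun b _ => hGnn b x)
      have hGbd : ∀ x, |G j x| ≤ 1 := fun x => abs_le.2 ⟨by linarith [hGnn j x], hGle j x⟩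
      have hiG : Integrable (G j) (μ (ν j)) := aux_integrable (hcontF (T j) j) 1 hGbd
      have hiF : Integrable F (μ (ν j)) := aux_integrable hFcont 1 hFbd
      exact le_trans (hintF (T j) j) (integral_mono hiG hiF hmono)
    have h4 : ∀ᶠ j in atTop, ∫ x, F x ∂ μ (ν j) < c := h2.eventually_lt_const hcpos
    obtain ⟨j, hj⟩ := h4.exists
    linarith [h3 j]
  -- conclude from main
  have hrw : ∀ n, μ n A = 1 - μ n Aᶜ := by
    intro n
    haveI := hprob n
    have h := prob_compl_eq_one_sub (μ := μ n) hAmeas.compl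
    rw [compl_compl] at h
    exact h
  have htend : Tendsto (fun n => (1 : ENNReal) - μ n Aᶜ) atTop (𝓝 (1 - 0)) :=
    ENNReal.Tendsto.sub tendsto_const_nhds main (Or.inl ENNReal.one_ne_top)
  simpa [hrw] using htend
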